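/- As s → +∞, Γ(s+1) = (s/e)^s √(2πs) · [1 + 1/(12s) + 1/(288s²) - 139/(51840s³) + o(1/s³)]. -/

import Mathlib

open Real Filter Asymptotics Topology Nat

noncomputable def Sg (x : ℝ) : ℝ := x * Real.log x - x + Real.log (2 * Real.pi * x) / 2
noncomputable def gg (x : ℝ) : ℝ := Real.log (Real.Gamma (x + 1)) - Sg x
noncomputable def AA (x : ℝ) : ℝ := 1 / (12 * x) - 1 / (360 * x ^ 3)


lemma two_pi_pos : (0:ℝ) < 2 * Real.pi := by positivity

lemma gg_rec {x : ℝ} (hx : 0 < x) :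
    gg x = gg (x + 1) + ((x + 1/2) * Real.log (1 + 1/x) - 1) := by
  have hx1 : (0:ℝ) < x + 1 := by linarith
  have h1 : Real.Gamma (x + 1 + 1) = (x + 1) * Real.Gamma (x + 1) :=
    Real.Gamma_add_one (by positivity)
  have hG : 0 < Real.Gamma (x + 1) := Real.Gamma_pos_of_pos (by positivity)
  have hlog1 : Real.log (Real.Gamma (x + 1 + 1)) =
      Real.log (x + 1) + Real.log (Real.Gamma (x + 1)) := by
    rw [h1, Real.log_mul (by positivity) (by positivity)]
  have hl2 : Real.log (2 * Real.pi * (x + 1)) = Real.log (2 * Real.pi) + Real.log (x + 1) := by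
    rw [Real.log_mul (by positivity) (by positivity)]
  have hl3 : Real.log (2 * Real.pi * x) = Real.log (2 * Real.pi) + Real.log x := by
    rw [Real.log_mul (by positivity) (by positivity)]
  have hl4 : Real.log (1 + 1/x) = Real.log (x + 1) - Real.log x := by
    rw [show (1:ℝ) + 1/x = (x+1)/x by field_simp, Real.log_div (by positivity) (by positivity)]
  simp only [gg, Sg, hlog1, hl2, hl3, hl4]
  ring

lemma gg_nat_eq {n : ℕ} (hn : 1 ≤ n) :
    gg n = Real.log (Stirling.stirlingSeq n) - Real.log Real.pi / 2 := by
  have hn0 : (0:ℝ) < n := by exact_mod_cast hn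
  have h1 : Real.Gamma ((n:ℝ) + 1) = n ! := Real.Gamma_nat_eq_factorial n
  have h2 := Stirling.log_stirlingSeq_formula n
  have h3 : Real.log ((n:ℝ) / Real.exp 1) = Real.log n - 1 := by
    rw [Real.log_div (by positivity) (Real.exp_ne_zero 1), Real.log_exp]
  have h4 : Real.log (2 * Real.pi * n) = Real.log (2 * n) + Real.log Real.pi := by
    rw [show 2 * Real.pi * (n:ℝ) = (2 * n) * Real.pi by ring,
      Real.log_mul (by positivity) (by positivity)]
  simp only [gg, Sg, h1, h2, h3, h4]
  ring

lemma gg_nat : Tendsto (fun n : ℕ => gg n) atTop (𝓝 0) := by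
  have hπ : (0:ℝ) < Real.sqrt Real.pi := Real.sqrt_pos.mpr Real.pi_pos
  have h1 : Tendsto (fun n : ℕ => Real.log (Stirling.stirlingSeq n)) atTop
      (𝓝 (Real.log (Real.sqrt Real.pi))) :=
    ((Real.continuousAt_log hπ.ne').tendsto).comp Stirling.tendsto_stirlingSeq_sqrt_pi
  have h2 : Real.log (Real.sqrt Real.pi) = Real.log Real.pi / 2 :=
    Real.log_sqrt Real.pi_pos.le
  have h3 : Tendsto (fun n : ℕ => Real.log (Stirling.stirlingSeq n) - Real.log Real.pi / 2)
      atTop (𝓝 0) := by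
    have := h1.sub_const (Real.log Real.pi / 2)
    rwa [h2, sub_self] at this
  refine h3.congr' ?_
  filter_upwards [eventually_ge_atTop 1] with n hn
  exact (gg_nat_eq hn).symm

lemma gamma_prod {s : ℝ} (hs : 0 < s) (n : ℕ) :
    Real.Gamma (s + n + 1) = Real.Gamma s * ∏ j ∈ Finset.range (n + 1), (s + j) := by
  induction n with
  | zero =>
      simp [Real.Gamma_add_one hs.ne']
      ring
  | succ n ih =>
      have h1 : s + (n + 1 : ℕ) + 1 = (s + n + 1) + 1 := by push_cast; ring
      have h2 : (0:ℝ) < s + n + 1 := by positivity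
      rw [h1, Real.Gamma_add_one h2.ne', ih,
        Finset.prod_range_succ (fun j => (s + (j:ℝ))) (n+1)]
      push_cast
      ring

lemma Sg_shift {s x : ℝ} (hs : 0 < s) (hx : 1 ≤ x) :
    s * Real.log x + Sg x - Sg (s + x) = s - (x + s + 1/2) * Real.log (1 + s/x) := by
  have hx0 : (0:ℝ) < x := by linarith
  have h1 : Real.log (s + x) = Real.log x + Real.log (1 + s/x) := by
    rw [show s + x = x * (1 + s/x) by field_simp; ring,
      Real.log_mul (by positivity) (by positivity)]
  have h2 : Real.log (2 * Real.pi * (s + x)) =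
      Real.log (2 * Real.pi * x) + Real.log (1 + s/x) := by
    rw [show 2 * Real.pi * (s + x) = (2 * Real.pi * x) * (1 + s/x) by field_simp; ring,
      Real.log_mul (by positivity) (by positivity)]
  simp only [Sg, h1, h2]
  ring

lemma gg_shift {s : ℝ} (hs : 0 < s) :
    Tendsto (fun n : ℕ => gg (s + n)) atTop (𝓝 0) := by
  have hG : 0 < Real.Gamma s := Real.Gamma_pos_of_pos hs
  -- step 1 : ratio tends to 1
  have h1 : Tendsto (fun n : ℕ => Real.Gamma s / Real.GammaSeq s n) atTop (𝓝 1) := by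
    have := (tendsto_const_nhds (α := ℕ) (x := Real.Gamma s)).div
      (Real.GammaSeq_tendsto_Gamma s) hG.ne'
    rw [div_self hG.ne'] at this
    exact this
  have h2 : ∀ n : ℕ, 1 ≤ n →
      Real.Gamma s / Real.GammaSeq s n
        = Real.Gamma (s + n + 1) / ((n:ℝ) ^ s * (n ! : ℝ)) := by
    intro n hn
    have hn0 : (0:ℝ) < n := by exact_mod_cast hn
    have hprod : (0:ℝ) < ∏ j ∈ Finset.range (n + 1), (s + j) := by
      apply Finset.prod_pos
      intro j _
      positivity
    rw [Real.GammaSeq, gamma_prod hs n]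
    rw [div_div_eq_mul_div]
  have h3 : Tendsto (fun n : ℕ =>
      Real.Gamma (s + n + 1) / ((n:ℝ) ^ s * (n ! : ℝ))) atTop (𝓝 1) := by
    refine h1.congr' ?_
    filter_upwards [eventually_ge_atTop 1] with n hn
    exact h2 n hn
  -- step 2: log of ratio tends to 0
  have h4 : Tendsto (fun n : ℕ =>
      Real.log (Real.Gamma (s + n + 1) / ((n:ℝ) ^ s * (n ! : ℝ)))) atTop (𝓝 0) := by
    have := ((Real.continuousAt_log one_ne_zero).tendsto).comp h3
    rw [Real.log_one] at this
    exact this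
  -- step 3: the elementary part tends to 0
  have h5 : Tendsto (fun n : ℕ => s - ((n:ℝ) + s + 1/2) * Real.log (1 + s/(n:ℝ)))
      atTop (𝓝 0) := by
    have ha : Tendsto (fun n : ℕ => (n:ℝ) * Real.log (1 + s/(n:ℝ))) atTop (𝓝 s) :=
      (Real.tendsto_mul_log_one_add_div_atTop s).comp tendsto_natCast_atTop_atTop
    have hb : Tendsto (fun n : ℕ => Real.log (1 + s/(n:ℝ))) atTop (𝓝 0) := by
      have hc : Tendsto (fun n : ℕ => 1 + s/(n:ℝ)) atTop (𝓝 1) := by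
        have := (tendsto_const_nhds (α := ℕ) (x := s)).div_atTop tendsto_natCast_atTop_atTop
        simpa using (tendsto_const_nhds (x := (1:ℝ))).add this
      have := ((Real.continuousAt_log one_ne_zero).tendsto).comp hc
      rw [Real.log_one] at this
      exact this
    have hd : Tendsto (fun n : ℕ => (s + 1/2) * Real.log (1 + s/(n:ℝ))) atTop (𝓝 0) := by
      simpa using hb.const_mul (s + 1/2)
    have he := ha.add hd
    rw [add_zero] at he
    have : Tendsto (fun n : ℕ => s - ((n:ℝ) * Real.log (1 + s/(n:ℝ))
        + (s + 1/2) * Real.log (1 + s/(n:ℝ)))) atTop (𝓝 (s - s)) :=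
      (tendsto_const_nhds).sub he
    rw [sub_self] at this
    refine this.congr ?_
    intro n
    ring
  -- combine
  have h6 : ∀ n : ℕ, 1 ≤ n → gg (s + n) =
      Real.log (Real.Gamma (s + n + 1) / ((n:ℝ) ^ s * (n ! : ℝ)))
        + gg n + (s - ((n:ℝ) + s + 1/2) * Real.log (1 + s/(n:ℝ))) := by
    intro n hn
    have hn0 : (0:ℝ) < n := by exact_mod_cast hn
    have hn1 : (1:ℝ) ≤ n := by exact_mod_cast hn
    have hfac : (0:ℝ) < (n ! : ℝ) := by exact_mod_cast Nat.factorial_pos n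
    have hGpos : 0 < Real.Gamma (s + n + 1) := Real.Gamma_pos_of_pos (by positivity)
    have hlogdiv : Real.log (Real.Gamma (s + n + 1) / ((n:ℝ) ^ s * (n ! : ℝ)))
        = Real.log (Real.Gamma (s + n + 1)) - s * Real.log n - Real.log (n ! : ℝ) := by
      rw [Real.log_div hGpos.ne' (by positivity), Real.log_mul (by positivity) hfac.ne',
        Real.log_rpow hn0]
      ring
    have hgamfac : Real.log (Real.Gamma ((n:ℝ) + 1)) = Real.log (n ! : ℝ) := by
      rw [Real.Gamma_nat_eq_factorial]
    have hSg := Sg_shift hs hn1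
    simp only [gg, hlogdiv]
    rw [← hgamfac]
    have : Real.log (Real.Gamma (s + ↑n + 1)) - Sg (s + ↑n) =
        (Real.log (Real.Gamma (s + ↑n + 1)) - s * Real.log ↑n - Real.log (Real.Gamma (↑n + 1)))
        + (Real.log (Real.Gamma (↑n + 1)) - Sg ↑n)
        + (s * Real.log ↑n + Sg ↑n - Sg (s + ↑n)) := by ring
    rw [this, hSg]
  have h7 := (h4.add gg_nat).add h5
  simp only [add_zero] at h7
  refine h7.congr' ?_
  filter_upwards [eventually_ge_atTop 1] with n hn
  exact (h6 n hn).symm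

lemma log_taylor5 {x : ℝ} (hx : 2 ≤ x) :
    |Real.log (1 + 1/x) - (1/x - 1/(2*x^2) + 1/(3*x^3) - 1/(4*x^4) + 1/(5*x^5))| ≤ 2/x^6 := by
  have hx0 : (0:ℝ) < x := by linarith
  have h1 : |(-(1/x) : ℝ)| < 1 := by
    rw [abs_neg, abs_of_pos (by positivity)]
    rw [div_lt_one hx0]; linarith
  have h2 := Real.abs_log_sub_add_sum_range_le h1 5
  have h3 : (∑ i ∈ Finset.range 5, (-(1/x)) ^ (i + 1) / (i + 1))
      = -(1/x - 1/(2*x^2) + 1/(3*x^3) - 1/(4*x^4) + 1/(5*x^5)) := by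
    norm_num [Finset.sum_range_succ]
    ring
  have h4 : (1 : ℝ) - -(1/x) = 1 + 1/x := by ring
  rw [h3, h4] at h2
  have h5 : |(-(1/x):ℝ)| = 1/x := by rw [abs_neg, abs_of_pos (by positivity)]
  rw [h5] at h2
  have hhalf : (1:ℝ)/x ≤ 1/2 := by
    rw [div_le_div_iff₀ hx0 (by norm_num)]; linarith
  have h7 : (1:ℝ)/2 ≤ 1 - 1/x := by linarith
  have h6 : (1/x:ℝ)^(5+1) / (1 - 1/x) ≤ 2/x^6 := by
    have h8 : (1/x:ℝ)^(5+1) = 1/x^6 := by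
      rw [div_pow]; norm_num
    rw [h8, div_le_div_iff₀ (by linarith) (by positivity)]
    have hl : (1:ℝ)/x^6 * x^6 = 1 := by field_simp
    nlinarith [pow_pos hx0 6]
  calc |Real.log (1 + 1/x) - (1/x - 1/(2*x^2) + 1/(3*x^3) - 1/(4*x^4) + 1/(5*x^5))|
      = |(-(1/x - 1/(2*x^2) + 1/(3*x^3) - 1/(4*x^4) + 1/(5*x^5))) + Real.log (1 + 1/x)| := by
        congr 1; ring
    _ ≤ (1/x)^(5+1) / (1 - 1/x) := h2
    _ ≤ 2/x^6 := h6

lemma Q_bound {x : ℝ} (hx : 2 ≤ x) :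
    |(x + 1/2) * (1/x - 1/(2*x^2) + 1/(3*x^3) - 1/(4*x^4) + 1/(5*x^5)) - 1
      - AA x + AA (x+1)| ≤ 1/x^5 := by
  have hx0 : (0:ℝ) < x := by linarith
  have hx1 : (0:ℝ) < x + 1 := by linarith
  have hQ : (x + 1/2) * (1/x - 1/(2*x^2) + 1/(3*x^3) - 1/(4*x^4) + 1/(5*x^5)) - 1
      - AA x + AA (x+1)
      = (120*x^8 + 440*x^7 + 590*x^6 + 342*x^5 + 72*x^4) / (720 * x^9 * (x+1)^4) := by
    simp only [AA]
    field_simp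
    ring
  rw [hQ, abs_of_pos (by positivity)]
  rw [div_le_div_iff₀ (by positivity) (by positivity)]
  have e0 : (0:ℝ) ≤ (x-2)^0 := pow_nonneg (by linarith) 0
  have e1 : (0:ℝ) ≤ (x-2)^1 := pow_nonneg (by linarith) 1
  have e2 : (0:ℝ) ≤ (x-2)^2 := pow_nonneg (by linarith) 2
  have e3 : (0:ℝ) ≤ (x-2)^3 := pow_nonneg (by linarith) 3
  have e4 : (0:ℝ) ≤ (x-2)^4 := pow_nonneg (by linarith) 4
  have e5 : (0:ℝ) ≤ (x-2)^5 := pow_nonneg (by linarith) 5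
  have e6 : (0:ℝ) ≤ (x-2)^6 := pow_nonneg (by linarith) 6
  have e7 : (0:ℝ) ≤ (x-2)^7 := pow_nonneg (by linarith) 7
  have e8 : (0:ℝ) ≤ (x-2)^8 := pow_nonneg (by linarith) 8
  have e9 : (0:ℝ) ≤ (x-2)^9 := pow_nonneg (by linarith) 9
  have e10 : (0:ℝ) ≤ (x-2)^10 := pow_nonneg (by linarith) 10
  have e11 : (0:ℝ) ≤ (x-2)^11 := pow_nonneg (by linarith) 11
  have e12 : (0:ℝ) ≤ (x-2)^12 := pow_nonneg (by linarith) 12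
  have e13 : (0:ℝ) ≤ (x-2)^13 := pow_nonneg (by linarith) 13
  nlinarith [e0,e1,e2,e3,e4,e5,e6,e7,e8,e9,e10,e11,e12,e13]

lemma delta_bound {x : ℝ} (hx : 2 ≤ x) :
    |gg x - AA x - (gg (x+1) - AA (x+1))| ≤ 4/x^5 := by
  have hx0 : (0:ℝ) < x := by linarith
  set P : ℝ := 1/x - 1/(2*x^2) + 1/(3*x^3) - 1/(4*x^4) + 1/(5*x^5) with hP
  have h1 : gg x - AA x - (gg (x+1) - AA (x+1))
      = ((x + 1/2) * P - 1 - AA x + AA (x+1))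
        + (x + 1/2) * (Real.log (1 + 1/x) - P) := by
    rw [gg_rec hx0]; ring
  have h2 := Q_bound hx
  have h3 := log_taylor5 hx
  have h4 : |(x + 1/2) * (Real.log (1 + 1/x) - P)| ≤ 3/x^5 := by
    rw [abs_mul, abs_of_pos (by linarith : (0:ℝ) < x + 1/2)]
    calc (x + 1/2) * |Real.log (1 + 1/x) - P| ≤ (x + 1/2) * (2/x^6) := by
          apply mul_le_mul_of_nonneg_left h3 (by linarith)
      _ ≤ 3/x^5 := by
          rw [show (x + 1/2) * (2/x^6) = (2*x+1)/x^6 by ring]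
          rw [div_le_div_iff₀ (by positivity) (by positivity)]
          nlinarith [pow_pos hx0 5, pow_pos hx0 6, pow_nonneg hx0.le 5]
  calc |gg x - AA x - (gg (x+1) - AA (x+1))|
      ≤ |(x + 1/2) * P - 1 - AA x + AA (x+1)| + |(x + 1/2) * (Real.log (1 + 1/x) - P)| := by
        rw [h1]; exact abs_add_le _ _
    _ ≤ 1/x^5 + 3/x^5 := add_le_add h2 h4
    _ = 4/x^5 := by ring

lemma sum_step {x : ℝ} (hx : 2 ≤ x) :
    4/x^5 ≤ 3 * (1/x^4 - 1/(x+1)^4) := by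
  have hx0 : (0:ℝ) < x := by linarith
  have hx1 : (0:ℝ) < x + 1 := by linarith
  rw [div_sub_div _ _ (by positivity) (by positivity), ← mul_div_assoc,
    div_le_div_iff₀ (by positivity) (by positivity)]
  nlinarith [pow_pos hx0 4, pow_pos hx1 4, pow_pos hx0 5, pow_nonneg hx0.le 2,
    pow_nonneg hx0.le 3, sq_nonneg x, mul_pos (pow_pos hx0 4) (pow_pos hx1 4)]

lemma gg_sub_AA {s : ℝ} (hs : 2 ≤ s) : |gg s - AA s| ≤ 3 / s^4 := by
  have hs0 : (0:ℝ) < s := by linarith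
  have key : ∀ n : ℕ, |gg s - AA s - (gg (s + n) - AA (s + n))|
      ≤ 3 * (1/s^4 - 1/(s + n)^4) := by
    intro n
    induction n with
    | zero => simp
    | succ n ih =>
        have hsn : 2 ≤ s + (n:ℝ) := by
          have : (0:ℝ) ≤ n := Nat.cast_nonneg n
          linarith
        have hd := delta_bound hsn
        have hstep := sum_step hsn
        have hcast : s + ((n+1 : ℕ):ℝ) = (s + n) + 1 := by push_cast; ring
        rw [hcast]
        have h1 : gg s - AA s - (gg ((s + n) + 1) - AA ((s + n) + 1))
            = (gg s - AA s - (gg (s + n) - AA (s + n)))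
              + (gg (s + n) - AA (s + n) - (gg ((s+n)+1) - AA ((s+n)+1))) := by ring
        rw [h1]
        calc |_ + _| ≤ |gg s - AA s - (gg (s + n) - AA (s + n))|
              + |gg (s + n) - AA (s + n) - (gg ((s+n)+1) - AA ((s+n)+1))| := abs_add_le _ _
          _ ≤ 3 * (1/s^4 - 1/(s + n)^4) + 4/(s+n)^5 := add_le_add ih hd
          _ ≤ 3 * (1/s^4 - 1/(s + n)^4) + 3 * (1/(s+n)^4 - 1/((s+n)+1)^4) := by linarith
          _ = 3 * (1/s^4 - 1/((s+n)+1)^4) := by ring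
  have hb : ∀ n : ℕ, |gg s - AA s - (gg (s + n) - AA (s + n))| ≤ 3 / s^4 := by
    intro n
    refine (key n).trans ?_
    have : (0:ℝ) < (s + n)^4 := by positivity
    have h2 : (0:ℝ) < 1/(s+n)^4 := by positivity
    rw [mul_sub]
    have : 3 * (1/s^4) = 3/s^4 := by ring
    nlinarith
  -- take limit
  have hAA : Tendsto (fun n : ℕ => AA (s + n)) atTop (𝓝 0) := by
    have h1 : Tendsto (fun n : ℕ => s + (n:ℝ)) atTop atTop :=
      tendsto_atTop_add_const_left _ _ tendsto_natCast_atTop_atTop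
    have h2 : Tendsto AA atTop (𝓝 0) := by
      have ha : Tendsto (fun x : ℝ => 1 / (12 * x)) atTop (𝓝 0) :=
        Tendsto.div_atTop tendsto_const_nhds (Tendsto.const_mul_atTop (by norm_num) tendsto_id)
      have hb : Tendsto (fun x : ℝ => 1 / (360 * x^3)) atTop (𝓝 0) :=
        Tendsto.div_atTop tendsto_const_nhds
          (Tendsto.const_mul_atTop (by norm_num) (tendsto_pow_atTop (by norm_num)))
      have h0 : Tendsto (fun x : ℝ => 1/(12*x) - 1/(360*x^3)) atTop (𝓝 (0 - 0)) := ha.sub hb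
      rw [sub_zero] at h0
      exact h0.congr fun x => rfl
    exact h2.comp h1
  have hggt := (gg_shift hs0).sub hAA
  rw [sub_zero] at hggt
  have hT : Tendsto (fun n : ℕ => gg s - AA s - (gg (s + n) - AA (s + n))) atTop
      (𝓝 (gg s - AA s)) := by
    have := (tendsto_const_nhds (α := ℕ) (x := gg s - AA s)).sub hggt
    simpa using this
  have := hT.abs
  exact le_of_tendsto this (Eventually.of_forall hb)

lemma E_eq {s : ℝ} (hs : 0 < s) :
    Real.Gamma (s + 1) / ((s / Real.exp 1) ^ s * Real.sqrt (2 * Real.pi * s))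
      = Real.exp (gg s) := by
  have hG : 0 < Real.Gamma (s + 1) := Real.Gamma_pos_of_pos (by linarith)
  have h2 : Real.exp (s * Real.log s - s) = (s / Real.exp 1) ^ s := by
    rw [Real.rpow_def_of_pos (by positivity),
      Real.log_div hs.ne' (Real.exp_ne_zero 1), Real.log_exp]
    ring_nf
  have h3 : Real.exp (Real.log (2 * Real.pi * s) / 2) = Real.sqrt (2 * Real.pi * s) := by
    rw [Real.sqrt_eq_rpow, Real.rpow_def_of_pos (by positivity)]
    ring_nf
  have h4 : Real.exp (Sg s) = (s / Real.exp 1) ^ s * Real.sqrt (2 * Real.pi * s) := by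
    rw [Sg, Real.exp_add, h2, h3]
  rw [gg, Real.exp_sub, Real.exp_log hG, h4]

lemma AA_bounds {s : ℝ} (hs : 2 ≤ s) : 0 ≤ AA s ∧ AA s ≤ 1/(12*s) := by
  have hs0 : (0:ℝ) < s := by linarith
  constructor
  · rw [AA, sub_nonneg, div_le_div_iff₀ (by positivity) (by positivity)]
    have h4 : (4:ℝ) ≤ s^2 := by nlinarith
    nlinarith [mul_le_mul_of_nonneg_right h4 hs0.le]
  · rw [AA]
    have : (0:ℝ) < 1/(360*s^3) := by positivity
    linarith

lemma T3_P {s : ℝ} (hs : 2 ≤ s) :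
    |(1 + AA s + (AA s)^2/2 + (AA s)^3/6)
      - (1 + 1/(12*s) + 1/(288*s^2) - 139/(51840*s^3))| ≤ 1/s^4 := by
  have hs0 : (0:ℝ) < s := by linarith
  have hid : (1 + AA s + (AA s)^2/2 + (AA s)^3/6)
      - (1 + 1/(12*s) + 1/(288*s^2) - 139/(51840*s^3))
      = -((64800*s^5 + 2700*s^4 - 1080*s^3 - 90*s^2 + 1) / (279936000 * s^9)) := by
    simp only [AA]
    field_simp
    ring
  have e0 : (0:ℝ) ≤ (s-2)^0 := pow_nonneg (by linarith) 0
  have e1 : (0:ℝ) ≤ (s-2)^1 := pow_nonneg (by linarith) 1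
  have e2 : (0:ℝ) ≤ (s-2)^2 := pow_nonneg (by linarith) 2
  have e3 : (0:ℝ) ≤ (s-2)^3 := pow_nonneg (by linarith) 3
  have e4 : (0:ℝ) ≤ (s-2)^4 := pow_nonneg (by linarith) 4
  have e5 : (0:ℝ) ≤ (s-2)^5 := pow_nonneg (by linarith) 5
  have hpos : (0:ℝ) < 64800*s^5 + 2700*s^4 - 1080*s^3 - 90*s^2 + 1 := by
    nlinarith [e0,e1,e2,e3,e4,e5]
  rw [hid, abs_neg, abs_of_pos (by positivity)]
  rw [div_le_div_iff₀ (by positivity) (by positivity)]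
  have key : 64800*s^5 + 2700*s^4 - 1080*s^3 - 90*s^2 + 1 ≤ 279936000 * s^5 := by
    nlinarith [e0,e1,e2,e3,e4,e5]
  have h4 : (0:ℝ) ≤ s^4 := by positivity
  nlinarith [mul_le_mul_of_nonneg_right key h4]

lemma T3_diff {u v : ℝ} (hu : |u| ≤ 1) (hv : |v| ≤ 1) :
    |(1 + u + u^2/2 + u^3/6) - (1 + v + v^2/2 + v^3/6)| ≤ 5/2 * |u - v| := by
  have hid : (1 + u + u^2/2 + u^3/6) - (1 + v + v^2/2 + v^3/6)
      = (u - v) * (1 + (u+v)/2 + (u^2 + u*v + v^2)/6) := by ring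
  rw [hid, abs_mul, mul_comm]
  apply mul_le_mul_of_nonneg_right _ (abs_nonneg _)
  rw [abs_le]
  have hu' := abs_le.mp hu
  have hv' := abs_le.mp hv
  constructor
  · nlinarith [sq_nonneg (u+v), sq_nonneg (u-v)]
  · nlinarith [sq_nonneg (u+v), sq_nonneg (u-v)]

lemma exp_taylor3 {u : ℝ} (hu : |u| ≤ 1) :
    |Real.exp u - (1 + u + u^2/2 + u^3/6)| ≤ |u|^4 := by
  have h := Real.exp_bound hu (by norm_num : 0 < 4)
  have hsum : (∑ m ∈ Finset.range 4, u ^ m / m.factorial) = 1 + u + u^2/2 + u^3/6 := by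
    norm_num [Finset.sum_range_succ, Nat.factorial]
  rw [hsum] at h
  refine h.trans ?_
  have h1 : (0:ℝ) ≤ |u|^4 := by positivity
  have h2 : ((4:ℕ).succ : ℝ) / ((4:ℕ).factorial * 4) ≤ 1 := by norm_num [Nat.factorial]
  nlinarith

lemma main_bound {s : ℝ} (hs : 2 ≤ s) :
    |Real.exp (gg s) - (1 + 1/(12*s) + 1/(288*s^2) - 139/(51840*s^3))| ≤ 10/s^4 := by
  have hs0 : (0:ℝ) < s := by linarith
  obtain ⟨hA0, hA1⟩ := AA_bounds hs
  have hA2 : |AA s| ≤ 1/(12*s) := by rwa [abs_of_nonneg hA0]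
  have hA3 : |AA s| ≤ 1 := by
    refine hA2.trans ?_
    rw [div_le_one (by positivity)]; linarith
  have hw := gg_sub_AA hs
  have h3s4 : 3/s^4 ≤ 3/(8*s) := by
    rw [div_le_div_iff₀ (by positivity) (by positivity)]
    nlinarith [pow_pos hs0 3, sq_nonneg s]
  have hg1 : |gg s| ≤ 1/(2*s) := by
    calc |gg s| = |(gg s - AA s) + AA s| := by ring_nf
      _ ≤ |gg s - AA s| + |AA s| := abs_add_le _ _
      _ ≤ 3/s^4 + 1/(12*s) := add_le_add hw hA2
      _ ≤ 3/(8*s) + 1/(12*s) := by linarith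
      _ ≤ 1/(2*s) := by
          rw [div_add_div _ _ (by positivity) (by positivity),
            div_le_div_iff₀ (by positivity) (by positivity)]
          nlinarith [sq_nonneg s]
  have hg2 : |gg s| ≤ 1 := by
    refine hg1.trans ?_
    rw [div_le_one (by positivity)]; linarith
  have hb1 : |Real.exp (gg s) - (1 + gg s + (gg s)^2/2 + (gg s)^3/6)| ≤ 1/s^4 := by
    refine (exp_taylor3 hg2).trans ?_
    calc |gg s|^4 ≤ (1/(2*s))^4 := by
          exact pow_le_pow_left₀ (abs_nonneg _) hg1 4
      _ ≤ 1/s^4 := by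
          rw [div_pow, div_le_div_iff₀ (by positivity) (by positivity)]
          nlinarith [pow_pos hs0 4]
  have hb2 : |(1 + gg s + (gg s)^2/2 + (gg s)^3/6) - (1 + AA s + (AA s)^2/2 + (AA s)^3/6)|
      ≤ 15/(2*s^4) := by
    refine (T3_diff hg2 hA3).trans ?_
    calc 5/2 * |gg s - AA s| ≤ 5/2 * (3/s^4) := by
          apply mul_le_mul_of_nonneg_left hw (by norm_num)
      _ = 15/(2*s^4) := by ring
  have hb3 := T3_P hs
  calc |Real.exp (gg s) - (1 + 1/(12*s) + 1/(288*s^2) - 139/(51840*s^3))|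
      ≤ |Real.exp (gg s) - (1 + gg s + (gg s)^2/2 + (gg s)^3/6)|
        + |(1 + gg s + (gg s)^2/2 + (gg s)^3/6) - (1 + AA s + (AA s)^2/2 + (AA s)^3/6)|
        + |(1 + AA s + (AA s)^2/2 + (AA s)^3/6)
            - (1 + 1/(12*s) + 1/(288*s^2) - 139/(51840*s^3))| := by
        apply (abs_sub_le _ _ _).trans
        refine add_le_add ?_ le_rfl
        exact abs_sub_le _ _ _
    _ ≤ 1/s^4 + 15/(2*s^4) + 1/s^4 := by
        exact add_le_add (add_le_add hb1 hb2) hb3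
    _ ≤ 10/s^4 := by
        rw [div_add_div _ _ (by positivity) (by positivity)]
        rw [div_add_div _ _ (by positivity) (by positivity)]
        rw [div_le_div_iff₀ (by positivity) (by positivity)]
        nlinarith [pow_pos hs0 4, pow_nonneg hs0.le 8, pow_nonneg hs0.le 12]

theorem stmt_18 :
    (fun s : ℝ =>
        Real.Gamma (s + 1) / ((s / Real.exp 1) ^ s * Real.sqrt (2 * Real.pi * s)) -
          (1 + 1 / (12 * s) + 1 / (288 * s ^ 2) - 139 / (51840 * s ^ 3)))
      =o[Filter.atTop] fun s : ℝ => 1 / s ^ 3 := by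
  rw [isLittleO_iff]
  intro c hc
  filter_upwards [eventually_ge_atTop (max 2 (10/c))] with s hs
  have hs2 : (2:ℝ) ≤ s := le_trans (le_max_left _ _) hs
  have hsc : 10/c ≤ s := le_trans (le_max_right _ _) hs
  have hs0 : (0:ℝ) < s := by linarith
  rw [E_eq hs0]
  have hmb := main_bound hs2
  have h10 : 10/s ≤ c := by
    rw [div_le_iff₀ hs0]
    rw [div_le_iff₀ hc] at hsc
    linarith
  have hnorm : ‖(1:ℝ)/s^3‖ = 1/s^3 := by
    rw [Real.norm_eq_abs, abs_of_pos (by positivity)]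
  rw [Real.norm_eq_abs, hnorm]
  calc |Real.exp (gg s) - (1 + 1/(12*s) + 1/(288*s^2) - 139/(51840*s^3))|
      ≤ 10/s^4 := hmb
    _ = (10/s) * (1/s^3) := by
        field_simp
    _ ≤ c * (1/s^3) := by
        apply mul_le_mul_of_nonneg_right h10 (by positivity)
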